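/- If a function f on lists over an alphabet of operations satisfies prefix-preservation and f(G) linearizes the write of value 1 before the write of value 0 to a register, then in no extension of G can a reader first read 0 and then read 1, given that reads return the value of the last preceding write in the linearization. -/

import Mathlib

/-- An operation on a single register with values in `V`. -/
inductive RegOp (V : Type) : Type
  | write (v : V) : RegOp V
  | read (v : V) : RegOp V
deriving DecidableEq

/-- The value held by the register (with initial value `init`) after executing
a sequential history. -/
def lastVal {V : Type} (init : V) (l : List (RegOp V)) : V :=
  l.foldl (fun acc o => match o with | .write v => v | .read _ => acc) init

/-- A sequential history is legal if every read returns the most recent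
previously written value (or the initial value if none). -/
def RegLegal {V : Type} (init : V) (l : List (RegOp V)) : Prop :=
  ∀ i v, l[i]? = some (RegOp.read v) → v = lastVal init (l.take i)

lemma lastVal_append {V : Type} (init : V) (a b : List (RegOp V)) :
    lastVal init (a ++ b) = lastVal (lastVal init a) b := by
  simp [lastVal, List.foldl_append]

/-- Register values `{0, 1, ⊥}`, encoded as `Option Bool` with `⊥ = none`,
`1 = some true`, `0 = some false`; the initial value is `⊥`. If `f` is
prefix-preserving, every `f H` is legal, and in `f G` the write of `1`
precedes the write of `0` (these being the only writes), then in `f H` for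
any extension `H` of `G`, after the write of `0` no read returning `0` can be
followed by a read returning `1`. -/
theorem stmt_7 (f : List (RegOp (Option Bool)) → List (RegOp (Option Bool)))
    (hpre : ∀ G H, G <+: H → f G <+: f H)
    (hleg : ∀ H, RegLegal none (f H))
    (G : List (RegOp (Option Bool))) (i₁ i₂ : ℕ) (h12 : i₁ < i₂)
    (hw1 : (f G)[i₁]? = some (RegOp.write (some true)))
    (hw0 : (f G)[i₂]? = some (RegOp.write (some false)))
    (H : List (RegOp (Option Bool))) (hGH : G <+: H)
    (honly : ∀ k v, (f H)[k]? = some (RegOp.write v) → k = i₁ ∨ k = i₂)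
    (i j : ℕ) (h2i : i₂ < i) (hij : i < j)
    (hri : (f H)[i]? = some (RegOp.read (some false))) :
    (f H)[j]? ≠ some (RegOp.read (some true)) := by
  intro hrj
  obtain ⟨t, ht⟩ := hpre G H hGH
  have hlen2 : i₂ < (f G).length := (List.getElem?_eq_some_iff.mp hw0).1
  have hw0' : (f H)[i₂]? = some (RegOp.write (some false)) := by
    rw [← ht, List.getElem?_append_left hlen2]; exact hw0
  have key : ∀ n, i₂ < n → n ≤ (f H).length →
      lastVal none ((f H).take n) = some false := by
    intro n
    induction n with
    | zero => omega
    | succ m ih =>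
      intro h1 h2
      rcases Nat.lt_or_ge i₂ m with hm | hm
      · have hmlen : m < (f H).length := by omega
        rw [List.take_succ]
        cases hx : (f H)[m]? with
        | none => exact absurd (List.getElem?_eq_none_iff.mp hx) (by omega)
        | some o =>
          cases o with
          | write v =>
            rcases honly m v hx with h | h <;> omega
          | read v =>
            rw [lastVal_append]
            simpa [lastVal] using ih hm (by omega)
      · have hm2 : m = i₂ := by omega
        subst hm2
        rw [List.take_succ, hw0', lastVal_append]
        simp [lastVal]
  have hjlen : j < (f H).length := (List.getElem?_eq_some_iff.mp hrj).1
  have := hleg H j (some true) hrj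
  rw [key j (by omega) (by omega)] at this
  exact Option.some.inj this |> Bool.noConfusion
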